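/- In Setup B, let J ∈ Λ with n+1 ∈ J, fix i₀ ∈ I'∖J, let c = (c_i)_{i∈J} be integers, and set J' := (J∖{n+1}) ∪ I'. For an admissible multi-index 𝔪, define γ(𝔪) := Σ_{i∈I'∩J}(c_i+m_i)·b_i* + Σ_{i∈I'∩K₁} m_i·b_i* + Σ_{i∈J'∖I'} c_i·b_i* + ⌈(c_{n+1} − Σ_{i∈I'∩J} α_i(c_i+m_i) − Σ_{i∈I'∩K₁} α_i m_i)/α_{i₀}⌉·b_{i₀}*. Let S := {Σ_{i=1}^n k_i·b_i* : k_i ∈ ℤ, k_{i₀} ≥ 0, k_i ≥ 0 for i ∈ J'∖I', k_i = 0 for i ∈ I'∖{i₀}} (the entries k_i for i ∈ I∖J' are arbitrary integers). Then the set Ξ := {ξ = Σ_{i=1}^n ξ_i·b_i* : ξ_i ∈ ℤ, ξ_i ≥ c_i for all i ∈ J∩I, and Σ_{i=1}^{n'} α_i ξ_i ≥ c_{n+1}} is the disjoint union, over all admissible multi-indices 𝔪, of the translates γ(𝔪) + S; that is, every ξ ∈ Ξ lies in γ(𝔪) + S for exactly one admissible 𝔪, and conversely γ(𝔪) + S ⊆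 Ξ for every admissible 𝔪. -/

import Mathlib

open scoped RealInnerProductSpace BigOperators

noncomputable section

/-- Euclidean space `ℝⁿ` with the standard inner product. -/
abbrev E (n : ℕ) : Type := EuclideanSpace ℝ (Fin n)

/-- The index set `I' = {1,…,n'}` inside `Ī = {1,…,n+1}` (index `Fin.last n`
plays the role of `n+1`). -/
def Iprime (n n' : ℕ) : Finset (Fin (n + 1)) := Finset.univ.filter fun i => i.val < n'

/-- `C(J,c) := {x ∈ ℝⁿ : ⟨x, b_i⟩ > c_i for all i ∈ J}`. -/
def CSet (n : ℕ) (b : Fin (n + 1) → E n) (J : Finset (Fin (n + 1)))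
    (c : Fin (n + 1) → ℤ) : Set (E n) :=
  {x | ∀ i ∈ J, (c i : ℝ) < ⟪x, b i⟫}

/-- A multi-index `𝔪 = (m_i)_{i ∈ I'∖{i₀}}` is admissible if `m_i ≥ 0` for every
`i ∈ I' ∩ J` (recall `i₀ ∉ J`). -/
def Admissible (n n' : ℕ) (J : Finset (Fin (n + 1))) (m : Fin (n + 1) → ℤ) : Prop :=
  ∀ i ∈ Iprime n n' ∩ J, 0 ≤ m i

/-- The ceiling bound
`⌈(c_{n+1} − Σ_{i∈I'∩J} α_i(c_i+m_i) − Σ_{i∈I'∩K₁} α_i m_i)/α_{i₀}⌉`,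
where `K₁ = Ī∖(J∪{i₀})`, so `I'∩K₁ = (I'∖J)∖{i₀}`. -/
def ceilB (n n' : ℕ) (α : Fin (n + 1) → ℚ) (J : Finset (Fin (n + 1)))
    (i₀ : Fin (n + 1)) (c m : Fin (n + 1) → ℤ) : ℤ :=
  ⌈((c (Fin.last n) : ℚ) - ∑ i ∈ Iprime n n' ∩ J, α i * ((c i : ℚ) + (m i : ℚ))
      - ∑ i ∈ (Iprime n n' \ J).erase i₀, α i * (m i : ℚ)) / α i₀⌉

/-- `V(J,c,𝔪)` as in Setup B. -/
def VSet (n n' : ℕ) (b : Fin (n + 1) → E n) (α : Fin (n + 1) → ℚ)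
    (J : Finset (Fin (n + 1))) (i₀ : Fin (n + 1)) (c m : Fin (n + 1) → ℤ) :
    Set (E n) :=
  {x | (∀ i ∈ Iprime n n' ∩ J, ((c i : ℝ) + (m i : ℝ)) < ⟪x, b i⟫)
    ∧ (∀ i ∈ (Iprime n n' \ J).erase i₀, (m i : ℝ) < ⟪x, b i⟫)
    ∧ (∀ i ∈ (J \ Iprime n n').erase (Fin.last n), (c i : ℝ) < ⟪x, b i⟫)
    ∧ ((ceilB n n' α J i₀ c m : ℝ) < ⟪x, b i₀⟫)}

/-- `F(J,c) := ⋃_{𝔪 admissible} V(J,c,𝔪)` (for `n+1 ∈ J`, with the choice `i₀`). -/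
def FSetB (n n' : ℕ) (b : Fin (n + 1) → E n) (α : Fin (n + 1) → ℚ)
    (J : Finset (Fin (n + 1))) (i₀ : Fin (n + 1)) (c : Fin (n + 1) → ℤ) : Set (E n) :=
  {x | ∃ m : Fin (n + 1) → ℤ, Admissible n n' J m ∧ x ∈ VSet n n' b α J i₀ c m}

/-- `F(J,c)` in general: the union above when `n+1 ∈ J`, and `C(J,c)` otherwise. -/
def FSetB' (n n' : ℕ) (b : Fin (n + 1) → E n) (α : Fin (n + 1) → ℚ)
    (J : Finset (Fin (n + 1))) (i₀ : Fin (n + 1)) (c : Fin (n + 1) → ℤ) : Set (E n) :=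
  if Fin.last n ∈ J then FSetB n n' b α J i₀ c else CSet n b J c

/-- Setup B: with `J' := (J∖{n+1}) ∪ I'`, the character
`γ(𝔪) = Σ_{i∈I'∩J}(c_i+m_i)b_i* + Σ_{i∈I'∩K₁} m_i b_i* + Σ_{i∈J'∖I'} c_i b_i*
+ ⌈(c_{n+1} − Σ α_i(c_i+m_i) − Σ α_i m_i)/α_{i₀}⌉ b_{i₀}*`, and the monoid of
exponents `S`, the set `Ξ` of lattice points of the dual cone is the disjoint
union over admissible `𝔪` of the translates `γ(𝔪) + S`. -/
theorem stmt7 (n n' : ℕ) (hn'1 : 1 ≤ n') (hn'n : n' ≤ n)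
    (b bs : Fin (n + 1) → E n) (α : Fin (n + 1) → ℚ)
    (hb : LinearIndependent ℝ fun i : Fin n => b i.castSucc)
    (hspan : Submodule.span ℝ (Set.range fun i : Fin n => b i.castSucc) = ⊤)
    (hdual : ∀ i j : Fin (n + 1), i.val < n → j.val < n →
      ⟪bs i, b j⟫ = if i = j then 1 else 0)
    (hα : ∀ i : Fin (n + 1), i.val < n' → 0 < α i)
    (hαsum : ∑ i ∈ Iprime n n', α i ≤ 1)
    (hlast : b (Fin.last n) = ∑ i ∈ Iprime n n', (α i : ℝ) • b i)
    (J : Finset (Fin (n + 1))) (hJne : J ≠ Finset.univ)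
    (hJI : ¬ Iprime n n' ⊆ J) (hJlast : Fin.last n ∈ J)
    (i₀ : Fin (n + 1)) (hi₀ : i₀ ∈ Iprime n n' \ J)
    (c : Fin (n + 1) → ℤ)
    (J' : Finset (Fin (n + 1))) (hJ' : J' = J.erase (Fin.last n) ∪ Iprime n n')
    (γ : (Fin (n + 1) → ℤ) → E n)
    (hγ : ∀ m, γ m =
      (∑ i ∈ Iprime n n' ∩ J, ((c i + m i : ℤ) : ℝ) • bs i)
      + (∑ i ∈ (Iprime n n' \ J).erase i₀, ((m i : ℤ) : ℝ) • bs i)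
      + (∑ i ∈ J' \ Iprime n n', ((c i : ℤ) : ℝ) • bs i)
      + ((ceilB n n' α J i₀ c m : ℤ) : ℝ) • bs i₀)
    (S : Set (E n))
    (hS : S = {y | ∃ k : Fin (n + 1) → ℤ,
      y = ∑ i ∈ Finset.univ.filter (fun i : Fin (n + 1) => i.val < n), (k i : ℝ) • bs i
      ∧ 0 ≤ k i₀ ∧ (∀ i ∈ J' \ Iprime n n', 0 ≤ k i)
      ∧ (∀ i ∈ (Iprime n n').erase i₀, k i = 0)})
    (Ξ : Set (E n))
    (hΞ : Ξ = {ξ | ∃ xc : Fin (n + 1) → ℤ,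
      ξ = ∑ i ∈ Finset.univ.filter (fun i : Fin (n + 1) => i.val < n), (xc i : ℝ) • bs i
      ∧ (∀ i ∈ J.erase (Fin.last n), c i ≤ xc i)
      ∧ (c (Fin.last n) : ℚ) ≤ ∑ i ∈ Iprime n n', α i * (xc i : ℚ)}) :
    (∀ ξ ∈ Ξ, ∃ m : Fin (n + 1) → ℤ, Admissible n n' J m ∧ ξ - γ m ∈ S)
    ∧ (∀ ξ ∈ Ξ, ∀ m m' : Fin (n + 1) → ℤ, Admissible n n' J m → Admissible n n' J m' →
        ξ - γ m ∈ S → ξ - γ m' ∈ S → ∀ i ∈ (Iprime n n').erase i₀, m i = m' i)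
    ∧ (∀ m : Fin (n + 1) → ℤ, Admissible n n' J m → ∀ y ∈ S, γ m + y ∈ Ξ) := by
    classical
  set big : Finset (Fin (n+1)) := Finset.univ.filter (fun i : Fin (n+1) => i.val < n) with hbig
  have hmemIp : ∀ i : Fin (n+1), i ∈ Iprime n n' ↔ i.val < n' := by
    intro i; simp [Iprime]
  have hIple : ∀ i ∈ Iprime n n', i.val < n := fun i hi =>
    lt_of_lt_of_le ((hmemIp i).1 hi) hn'n
  have hmembig : ∀ i : Fin (n+1), i ∈ big ↔ i.val < n := by intro i; simp [hbig]
  have hIpbig : Iprime n n' ⊆ big := fun i hi => (hmembig i).2 (hIple i hi)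
  have hIplast : ∀ i ∈ Iprime n n', i ≠ Fin.last n := by
    intro i hi h
    have h2 := hIple i hi
    rw [h, Fin.val_last] at h2
    exact lt_irrefl n h2
  have hi₀Ip : i₀ ∈ Iprime n n' := (Finset.mem_sdiff.1 hi₀).1
  have hi₀J : i₀ ∉ J := (Finset.mem_sdiff.1 hi₀).2
  have hi₀n : i₀.val < n := hIple i₀ hi₀Ip
  have hi₀big : i₀ ∈ big := (hmembig i₀).2 hi₀n
  have hαi₀ : (0:ℚ) < α i₀ := hα i₀ ((hmemIp i₀).1 hi₀Ip)
  have herasebig : J.erase (Fin.last n) ⊆ big := by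
    intro i hi
    exact (hmembig i).2 (Fin.val_lt_last (Finset.ne_of_mem_erase hi))
  have hJ'big : J' ⊆ big := by
    rw [hJ']; exact Finset.union_subset herasebig hIpbig
  have hJ'I'sub : J' \ Iprime n n' ⊆ J.erase (Fin.last n) := by
    rw [hJ']; intro i hi
    rcases Finset.mem_sdiff.1 hi with ⟨h1, h2⟩
    rcases Finset.mem_union.1 h1 with h | h
    · exact h
    · exact absurd h h2
  set g : (Fin (n+1) → ℤ) → Fin (n+1) → ℤ := fun m i =>
    (if i ∈ Iprime n n' ∩ J then c i + m i else 0)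
    + (if i ∈ (Iprime n n' \ J).erase i₀ then m i else 0)
    + (if i ∈ J' \ Iprime n n' then c i else 0)
    + (if i = i₀ then ceilB n n' α J i₀ c m else 0) with hgdef
  have hg1 : ∀ m i, i ∈ Iprime n n' ∩ J → g m i = c i + m i := by
    intro m i hi
    rcases Finset.mem_inter.1 hi with ⟨hiI, hiJ⟩
    have h2 : i ∉ (Iprime n n' \ J).erase i₀ := fun h =>
      (Finset.mem_sdiff.1 (Finset.mem_of_mem_erase h)).2 hiJ
    have h3 : i ∉ J' \ Iprime n n' := fun h => (Finset.mem_sdiff.1 h).2 hiI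
    have h4 : i ≠ i₀ := fun h => hi₀J (h ▸ hiJ)
    simp [hgdef, hiI, hiJ, h4]
  have hg2 : ∀ m i, i ∈ (Iprime n n' \ J).erase i₀ → g m i = m i := by
    intro m i hi
    rcases Finset.mem_erase.1 hi with ⟨hne, hsd⟩
    rcases Finset.mem_sdiff.1 hsd with ⟨hiI, hiJ⟩
    have h1 : i ∉ Iprime n n' ∩ J := fun h => hiJ (Finset.mem_inter.1 h).2
    simp [hgdef, hiI, hiJ, hne]
  have hg3 : ∀ m i, i ∈ J' \ Iprime n n' → g m i = c i := by
    intro m i hi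
    have hiI : i ∉ Iprime n n' := (Finset.mem_sdiff.1 hi).2
    have h1 : i ∉ Iprime n n' ∩ J := fun h => hiI (Finset.mem_inter.1 h).1
    have h2 : i ∉ (Iprime n n' \ J).erase i₀ := fun h =>
      hiI (Finset.mem_sdiff.1 (Finset.mem_of_mem_erase h)).1
    have h4 : i ≠ i₀ := fun h => hiI (h ▸ hi₀Ip)
    simp [hgdef, hiI, h4, (Finset.mem_sdiff.1 hi).1]
  have hg4 : ∀ m, g m i₀ = ceilB n n' α J i₀ c m := by
    intro m
    have h1 : i₀ ∉ Iprime n n' ∩ J := fun h => hi₀J (Finset.mem_inter.1 h).2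
    have h2 : i₀ ∉ (Iprime n n' \ J).erase i₀ := Finset.notMem_erase i₀ _
    simp [hgdef, hi₀J, hi₀Ip]
  have hcover : ∀ i ∈ (Iprime n n').erase i₀,
      i ∈ Iprime n n' ∩ J ∨ i ∈ (Iprime n n' \ J).erase i₀ := by
    intro i hi
    rcases Finset.mem_erase.1 hi with ⟨hne, hiI⟩
    by_cases hiJ : i ∈ J
    · exact Or.inl (Finset.mem_inter.2 ⟨hiI, hiJ⟩)
    · exact Or.inr (Finset.mem_erase.2 ⟨hne, Finset.mem_sdiff.2 ⟨hiI, hiJ⟩⟩)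
  have hsplitI' : ∀ f : Fin (n+1) → ℚ, ∑ i ∈ Iprime n n', f i
      = ∑ i ∈ Iprime n n' ∩ J, f i + ∑ i ∈ (Iprime n n' \ J).erase i₀, f i + f i₀ := by
    intro f
    rw [← Finset.sum_inter_add_sum_sdiff (Iprime n n') J f,
      ← Finset.add_sum_erase _ f (Finset.mem_sdiff.2 ⟨hi₀Ip, hi₀J⟩)]
    ring
  have hγ' : ∀ m, γ m = ∑ i ∈ big, (g m i : ℝ) • bs i := by
    intro m
    have step : ∀ i, ((g m i : ℤ) : ℝ) • bs i =
        (if i ∈ Iprime n n' ∩ J then ((c i + m i : ℤ) : ℝ) • bs i else 0)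
        + (if i ∈ (Iprime n n' \ J).erase i₀ then ((m i : ℤ) : ℝ) • bs i else 0)
        + (if i ∈ J' \ Iprime n n' then ((c i : ℤ) : ℝ) • bs i else 0)
        + (if i = i₀ then ((ceilB n n' α J i₀ c m : ℤ) : ℝ) • bs i else 0) := by
      intro i
      rw [hgdef]
      push_cast [apply_ite (Int.cast : ℤ → ℝ)]
      simp only [add_smul, ite_smul, zero_smul, Int.cast_zero]
    rw [hγ m]
    calc (∑ i ∈ Iprime n n' ∩ J, ((c i + m i : ℤ) : ℝ) • bs i)
        + (∑ i ∈ (Iprime n n' \ J).erase i₀, ((m i : ℤ) : ℝ) • bs i)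
        + (∑ i ∈ J' \ Iprime n n', ((c i : ℤ) : ℝ) • bs i)
        + ((ceilB n n' α J i₀ c m : ℤ) : ℝ) • bs i₀
        = (∑ i ∈ big, if i ∈ Iprime n n' ∩ J then ((c i + m i : ℤ) : ℝ) • bs i else 0)
        + (∑ i ∈ big, if i ∈ (Iprime n n' \ J).erase i₀ then ((m i : ℤ) : ℝ) • bs i else 0)
        + (∑ i ∈ big, if i ∈ J' \ Iprime n n' then ((c i : ℤ) : ℝ) • bs i else 0)
        + (∑ i ∈ big, if i = i₀ then ((ceilB n n' α J i₀ c m : ℤ) : ℝ) • bs i else 0) := by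
          rw [Finset.sum_ite_mem, Finset.sum_ite_mem, Finset.sum_ite_mem,
            Finset.sum_ite_eq' big i₀, if_pos hi₀big,
            Finset.inter_eq_right.2 (fun i hi => hIpbig (Finset.mem_inter.1 hi).1),
            Finset.inter_eq_right.2 (fun i hi =>
              hIpbig (Finset.mem_sdiff.1 (Finset.mem_of_mem_erase hi)).1),
            Finset.inter_eq_right.2 (fun i hi => hJ'big (Finset.mem_sdiff.1 hi).1)]
      _ = ∑ i ∈ big, (g m i : ℝ) • bs i := by
          rw [← Finset.sum_add_distrib, ← Finset.sum_add_distrib, ← Finset.sum_add_distrib]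
          exact Finset.sum_congr rfl fun i _ => (step i).symm
  have coordZ : ∀ (a : Fin (n+1) → ℤ) (j : Fin (n+1)), j.val < n →
      ⟪(∑ i ∈ big, (a i : ℝ) • bs i), b j⟫ = (a j : ℝ) := by
    intro a j hj
    rw [sum_inner, Finset.sum_eq_single j]
    · rw [real_inner_smul_left, hdual j j hj hj, if_pos rfl, mul_one]
    · intro i hi hij
      rw [real_inner_smul_left, hdual i j ((hmembig i).1 hi) hj, if_neg hij, mul_zero]
    · intro hj'; exact absurd ((hmembig j).2 hj) hj'
  refine ⟨?_, ?_, ?_⟩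
  · -- Part 1: existence
    intro ξ hξ
    rw [hΞ] at hξ
    obtain ⟨xc, hxceq, hxc1, hxc2⟩ := hξ
    set m : Fin (n+1) → ℤ := fun i => if i ∈ J then xc i - c i else xc i with hmdef
    have hmJ : ∀ i ∈ Iprime n n' ∩ J, m i = xc i - c i := fun i hi =>
      if_pos (Finset.mem_inter.1 hi).2
    have hmNJ : ∀ i, i ∉ J → m i = xc i := fun i hi => if_neg hi
    have hadm : Admissible n n' J m := by
      intro i hi
      rcases Finset.mem_inter.1 hi with ⟨hiI, hiJ⟩
      rw [hmJ i hi]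
      have h := hxc1 i (Finset.mem_erase.2 ⟨hIplast i hiI, hiJ⟩)
      omega
    refine ⟨m, hadm, ?_⟩
    rw [hS]
    refine ⟨fun i => xc i - g m i, ?_, ?_, ?_, ?_⟩
    · rw [hxceq, hγ' m, ← Finset.sum_sub_distrib]
      exact Finset.sum_congr rfl fun i _ => by rw [Int.cast_sub, sub_smul]
    · show 0 ≤ xc i₀ - g m i₀
      have key : ceilB n n' α J i₀ c m ≤ xc i₀ := by
        rw [ceilB, Int.ceil_le, div_le_iff₀ hαi₀]
        have e1 : ∑ i ∈ Iprime n n' ∩ J, α i * ((c i : ℚ) + (m i : ℚ))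
            = ∑ i ∈ Iprime n n' ∩ J, α i * (xc i : ℚ) :=
          Finset.sum_congr rfl fun i hi => by rw [hmJ i hi]; push_cast; ring
        have e2 : ∑ i ∈ (Iprime n n' \ J).erase i₀, α i * (m i : ℚ)
            = ∑ i ∈ (Iprime n n' \ J).erase i₀, α i * (xc i : ℚ) :=
          Finset.sum_congr rfl fun i hi => by
            rw [hmNJ i (Finset.mem_sdiff.1 (Finset.mem_of_mem_erase hi)).2]
        rw [e1, e2]
        have h := hxc2
        rw [hsplitI' (fun i => α i * (xc i : ℚ))] at h
        nlinarith [h]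
      have := hg4 m
      simp only [this]
      omega
    · intro i hi
      show 0 ≤ xc i - g m i
      rw [hg3 m i hi]
      have h := hxc1 i (hJ'I'sub hi)
      omega
    · intro i hi
      show xc i - g m i = 0
      rcases hcover i hi with h | h
      · rw [hg1 m i h, hmJ i h]; ring
      · rw [hg2 m i h, hmNJ i (Finset.mem_sdiff.1 (Finset.mem_of_mem_erase h)).2]; ring
  · -- Part 2: uniqueness
    intro ξ _ m m' _ _ hS1 hS2 i hi
    rw [hS] at hS1 hS2
    obtain ⟨k, hk, _, _, hk3⟩ := hS1
    obtain ⟨k', hk', _, _, hk3'⟩ := hS2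
    have hin : i.val < n := hIple i (Finset.mem_of_mem_erase hi)
    have E1 : ⟪ξ, b i⟫ - ⟪γ m, b i⟫ = (k i : ℝ) := by
      rw [← inner_sub_left, hk]; exact coordZ k i hin
    have E2 : ⟪ξ, b i⟫ - ⟪γ m', b i⟫ = (k' i : ℝ) := by
      rw [← inner_sub_left, hk']; exact coordZ k' i hin
    rw [hk3 i hi] at E1
    rw [hk3' i hi] at E2
    have F1 : ⟪γ m, b i⟫ = (g m i : ℝ) := by rw [hγ' m]; exact coordZ _ i hin
    have F2 : ⟪γ m', b i⟫ = (g m' i : ℝ) := by rw [hγ' m']; exact coordZ _ i hin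
    have heq : (g m i : ℝ) = (g m' i : ℝ) := by
      rw [← F1, ← F2]; push_cast at E1 E2; linarith
    have heqZ : g m i = g m' i := by exact_mod_cast heq
    rcases hcover i hi with h | h
    · rw [hg1 m i h, hg1 m' i h] at heqZ; omega
    · rw [hg2 m i h, hg2 m' i h] at heqZ; exact heqZ
  · -- Part 3: converse inclusion
    intro m hm y hy
    rw [hS] at hy
    obtain ⟨k, hky, hk1, hk2, hk3⟩ := hy
    rw [hΞ]
    refine ⟨fun i => g m i + k i, ?_, ?_, ?_⟩
    · rw [hγ' m, hky, ← Finset.sum_add_distrib]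
      refine Finset.sum_congr rfl fun i _ => ?_
      show (g m i : ℝ) • bs i + (k i : ℝ) • bs i = ((g m i + k i : ℤ) : ℝ) • bs i
      push_cast
      rw [add_smul]
    · intro i hi
      show c i ≤ g m i + k i
      have hiJ := Finset.mem_of_mem_erase hi
      by_cases hiI : i ∈ Iprime n n'
      · have hin : i ∈ Iprime n n' ∩ J := Finset.mem_inter.2 ⟨hiI, hiJ⟩
        have hne : i ≠ i₀ := fun h => hi₀J (h ▸ hiJ)
        have hmi := hm i hin
        rw [hg1 m i hin, hk3 i (Finset.mem_erase.2 ⟨hne, hiI⟩)]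
        omega
      · have hin : i ∈ J' \ Iprime n n' := Finset.mem_sdiff.2
          ⟨by rw [hJ']; exact Finset.mem_union_left _ hi, hiI⟩
        have hki := hk2 i hin
        rw [hg3 m i hin]
        omega
    · rw [hsplitI' (fun i => α i * (((fun i => g m i + k i) i : ℤ) : ℚ))]
      have t1 : ∑ i ∈ Iprime n n' ∩ J, α i * ((g m i + k i : ℤ) : ℚ)
          = ∑ i ∈ Iprime n n' ∩ J, α i * ((c i : ℚ) + (m i : ℚ)) :=
        Finset.sum_congr rfl fun i hi => by
          have hne : i ≠ i₀ := fun h => hi₀J (h ▸ (Finset.mem_inter.1 hi).2)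
          rw [hg1 m i hi, hk3 i (Finset.mem_erase.2 ⟨hne, (Finset.mem_inter.1 hi).1⟩)]
          push_cast; ring
      have t2 : ∑ i ∈ (Iprime n n' \ J).erase i₀, α i * ((g m i + k i : ℤ) : ℚ)
          = ∑ i ∈ (Iprime n n' \ J).erase i₀, α i * (m i : ℚ) :=
        Finset.sum_congr rfl fun i hi => by
          rcases Finset.mem_erase.1 hi with ⟨hne, hsd⟩
          rw [hg2 m i hi, hk3 i (Finset.mem_erase.2 ⟨hne, (Finset.mem_sdiff.1 hsd).1⟩)]
          push_cast; ring
      simp only []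
      rw [t1, t2]
      have hcb : ceilB n n' α J i₀ c m
          = ⌈((c (Fin.last n) : ℚ) - ∑ i ∈ Iprime n n' ∩ J, α i * ((c i : ℚ) + (m i : ℚ))
              - ∑ i ∈ (Iprime n n' \ J).erase i₀, α i * (m i : ℚ)) / α i₀⌉ := rfl
      have h1 : ((c (Fin.last n) : ℚ) - ∑ i ∈ Iprime n n' ∩ J, α i * ((c i : ℚ) + (m i : ℚ))
              - ∑ i ∈ (Iprime n n' \ J).erase i₀, α i * (m i : ℚ)) / α i₀
          ≤ ((ceilB n n' α J i₀ c m : ℤ) : ℚ) := by rw [hcb]; exact Int.le_ceil _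
      rw [div_le_iff₀ hαi₀] at h1
      have hg4m := hg4 m
      have hk₀ : (0:ℚ) ≤ (k i₀ : ℚ) := by exact_mod_cast hk1
      have hval : ((g m i₀ + k i₀ : ℤ) : ℚ) = ((ceilB n n' α J i₀ c m : ℤ) : ℚ) + (k i₀ : ℚ) := by
        rw [hg4m]; push_cast; ring
      rw [hval]
      nlinarith [hαi₀, hk₀, h1]
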